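/- arXiv:2205.07010 — 5 statements merged into one kernel-verified Lean document; each statement's English description precedes it below -/
import Mathlib

section
/- Let X be a bipartite mixed graph with a unique perfect matching and let H_α be its α-hermitian adjacency matrix for a unit complex number α. Then H_α is non-singular (invertible). -/
open SimpleGraph
open scoped Classical

noncomputable section

variable {V : Type*}

structure MixedGraph (V : Type*) where
  digon : V → V → Prop
  arc : V → V → Prop
  digon_symm : ∀ u v, digon u v → digon v u
  digon_irrefl : ∀ v, ¬ digon v v
  arc_irrefl : ∀ v, ¬ arc v v
  arc_asymm : ∀ u v, arc u v → ¬ arc v u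
  digon_arc : ∀ u v, digon u v → ¬ arc u v ∧ ¬ arc v u

def MixedGraph.underlying (X : MixedGraph V) : SimpleGraph V where
  Adj u v := X.digon u v ∨ X.arc u v ∨ X.arc v u
  symm := by
    constructor
    intro u v h
    rcases h with h | h | h
    · exact Or.inl (X.digon_symm u v h)
    · exact Or.inr (Or.inr h)
    · exact Or.inr (Or.inl h)
  loopless := by
    constructor
    intro v h
    rcases h with h | h | h
    · exact X.digon_irrefl v h
    · exact X.arc_irrefl v h
    · exact X.arc_irrefl v h

/-- The α-hermitian adjacency matrix of a mixed graph. -/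
def Halpha (X : MixedGraph V) (α : ℂ) : Matrix V V ℂ := fun u v =>
  if X.digon u v then 1
  else if X.arc u v then α
  else if X.arc v u then (starRingEnd ℂ) α
  else 0

/-- The value h_α of a walk: product of matrix entries along consecutive vertices. -/
def hWalk (X : MixedGraph V) (α : ℂ) {u v : V} (p : X.underlying.Walk u v) : ℂ :=
  (p.darts.map (fun d => Halpha X α d.toProd.1 d.toProd.2)).prod

/-- A co-augmenting path w.r.t. a matching edge set `M`: a path whose edges alternate
matching / non-matching, beginning and ending with matching edges. -/
def IsCoAugmenting (G : SimpleGraph V) (M : Set (Sym2 V)) {u v : V} (p : G.Walk u v) : Prop :=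
  p.IsPath ∧ Odd p.edges.length ∧
    ∀ i : Fin p.edges.length, (p.edges.get i ∈ M ↔ Even i.val)

/-- `G` is unicyclic: connected with exactly one cycle (all cycles have the same edge set). -/
def IsUnicyclic (G : SimpleGraph V) : Prop :=
  G.Connected ∧ (∃ (u : V) (c : G.Walk u u), c.IsCycle) ∧
    ∀ (u v : V) (c : G.Walk u u) (d : G.Walk v v), c.IsCycle → d.IsCycle →
      {e | e ∈ c.edges} = {e | e ∈ d.edges}

/-- A peg: a matching edge incident to a vertex of the cycle `c` but not an edge of `c`. -/
def IsPeg (G : SimpleGraph V) (M : G.Subgraph) {u : V} (c : G.Walk u u) (e : Sym2 V) : Prop :=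
  e ∈ M.edgeSet ∧ e ∉ c.edges ∧ ∃ x ∈ c.support, x ∈ e

/-- Restriction of a matching to an induced subgraph. -/
def restrictMatching (G : SimpleGraph V) (M : G.Subgraph) (s : Set V) :
    (G.induce s).Subgraph where
  verts := Set.univ
  Adj a b := M.Adj a.1 b.1
  adj_sub h := M.adj_sub h
  edge_vert _ := Set.mem_univ _
  symm := ⟨fun _ _ h => M.adj_symm h⟩

/-- The sign `f_W` at the end of a walk: starts at 1 and flips across non-matching edges. -/
def fEnd (G : SimpleGraph V) (M : Set (Sym2 V)) : ∀ {u v : V}, G.Walk u v → ℤ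
  | _, _, SimpleGraph.Walk.nil => 1
  | _, _, @SimpleGraph.Walk.cons _ _ u w _ _ p =>
      if s(u, w) ∈ M then fEnd G M p else - fEnd G M p

end

section Aux

variable {V : Type*} [Fintype V] [DecidableEq V]

lemma halpha_ne_zero_of_adj (X : MixedGraph V) {α : ℂ} (hα0 : α ≠ 0)
    {a b : V} (hab : X.underlying.Adj a b) : Halpha X α a b ≠ 0 := by
  have hab' : X.digon a b ∨ X.arc a b ∨ X.arc b a := hab
  simp only [Halpha]
  split_ifs with h1 h2 h3
  · exact one_ne_zero
  · exact hα0
  · simpa using hα0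
  · tauto

lemma adj_of_halpha_ne_zero (X : MixedGraph V) {α : ℂ}
    {a b : V} (h : Halpha X α a b ≠ 0) : X.underlying.Adj a b := by
  show X.digon a b ∨ X.arc a b ∨ X.arc b a
  by_contra hc
  push_neg at hc
  exact h (by simp [Halpha, hc.1, hc.2.1, hc.2.2])

lemma fin_two_cases : ∀ x : Fin 2, x = 0 ∨ x = 1 := by decide

lemma perm_matching (G : SimpleGraph V) (c : G.Coloring (Fin 2)) (σ : Equiv.Perm V)
    (hAdj : ∀ v, G.Adj v (σ v)) :
    ∃ N : G.Subgraph, N.IsPerfectMatching ∧ ∀ v, c v = 0 → N.Adj v (σ v) := by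
  have hcol : ∀ a b : V, G.Adj a b → c a = 0 → c b ≠ 0 := fun a b hab h0 h0' =>
    c.valid hab (h0.trans h0'.symm)
  refine ⟨{ verts := Set.univ,
            Adj := fun a b => (c a = 0 ∧ b = σ a) ∨ (c b = 0 ∧ a = σ b),
            adj_sub := ?_, edge_vert := ?_, symm := ?_ }, ?_, ?_⟩
  · rintro a b (⟨h0, rfl⟩ | ⟨h0, rfl⟩)
    · exact hAdj a
    · exact (hAdj b).symm
  · intro a b _
    trivial
  · constructor
    intro a b h
    tauto
  · rw [SimpleGraph.Subgraph.isPerfectMatching_iff]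
    intro v
    rcases fin_two_cases (c v) with h0 | h1
    · refine ⟨σ v, Or.inl ⟨h0, rfl⟩, ?_⟩
      rintro w hw
      rcases hw with ⟨_, rfl⟩ | ⟨hw0, hv⟩
      · rfl
      · exact absurd h0 (by subst hv; exact hcol w (σ w) (hAdj w) hw0)
    · have hsv : G.Adj (σ.symm v) v := by
        have := hAdj (σ.symm v)
        rwa [σ.apply_symm_apply] at this
      have h0' : c (σ.symm v) = 0 := by
        rcases fin_two_cases (c (σ.symm v)) with h | h
        · exact h
        · exact absurd (h.trans h1.symm) (c.valid hsv)
      refine ⟨σ.symm v, Or.inr ⟨h0', (σ.apply_symm_apply v).symm⟩, ?_⟩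
      rintro w hw
      rcases hw with ⟨hv0, rfl⟩ | ⟨_, hv⟩
      · rw [h1] at hv0
        exact absurd hv0 (by decide)
      · rw [hv, σ.symm_apply_apply]
  · intro v h0
    exact Or.inl ⟨h0, rfl⟩

end Aux

/-- The α-hermitian adjacency matrix of a bipartite mixed graph with a unique perfect
matching is non-singular. -/
theorem stmt5 {V : Type*} [Fintype V] [DecidableEq V]
    (X : MixedGraph V) (α : ℂ) (hα : ‖α‖ = 1)
    (hbip : X.underlying.Colorable 2)
    (M : X.underlying.Subgraph) (hM : M.IsPerfectMatching)
    (huniq : ∀ N : X.underlying.Subgraph, N.IsPerfectMatching → N = M) :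
    (Halpha X α).det ≠ 0 := by
  classical
  obtain ⟨c⟩ := hbip
  have hα0 : α ≠ 0 := fun h => by simp [h] at hα
  have hM' := SimpleGraph.Subgraph.isPerfectMatching_iff.mp hM
  set f : V → V := fun v => (hM' v).choose with hf
  have hfadj : ∀ v, M.Adj v (f v) := fun v => (hM' v).choose_spec.1
  have hfuniq : ∀ v w, M.Adj v w → w = f v := fun v w h => (hM' v).choose_spec.2 w h
  have hinv : Function.Involutive f := fun v => (hfuniq (f v) v (hfadj v).symm).symm
  set σM : Equiv.Perm V := hinv.toPerm with hσM
  have hσMv : ∀ v, σM v = f v := fun v => rfl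
  rw [Matrix.det_apply, Finset.sum_eq_single σM]
  · have hprod : (∏ i, Halpha X α (σM i) i) ≠ 0 := by
      rw [Finset.prod_ne_zero_iff]
      intro i _
      exact halpha_ne_zero_of_adj X hα0 (M.adj_sub (hfadj i)).symm
    rcases Int.units_eq_one_or (Equiv.Perm.sign σM) with h | h <;> simp [h, hprod]
  · intro σ _ hσ
    by_contra hterm
    have hprod : (∏ i, Halpha X α (σ i) i) ≠ 0 := fun h => hterm (by simp [h])
    rw [Finset.prod_ne_zero_iff] at hprod
    have hAdj : ∀ v, X.underlying.Adj v (σ v) :=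
      fun v => (adj_of_halpha_ne_zero X (hprod v (Finset.mem_univ v))).symm
    have hAdj' : ∀ v, X.underlying.Adj v (σ.symm v) := by
      intro v
      have := hAdj (σ.symm v)
      rw [σ.apply_symm_apply] at this
      exact this.symm
    obtain ⟨N, hN, hN0⟩ := perm_matching X.underlying c σ hAdj
    obtain ⟨N', hN', hN0'⟩ := perm_matching X.underlying c σ.symm hAdj'
    have hNM := huniq N hN
    have hN'M := huniq N' hN'
    apply hσ
    apply Equiv.ext
    intro v
    rw [hσMv]
    have hMv : M.Adj v (σ v) := by
      rcases fin_two_cases (c v) with h0 | h1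
      · exact hNM ▸ hN0 v h0
      · have h0' : c (σ v) = 0 := by
          rcases fin_two_cases (c (σ v)) with h | h
          · exact h
          · exact absurd (h1.trans h.symm) (c.valid (hAdj v))
        have := hN0' (σ v) h0'
        rw [σ.symm_apply_apply] at this
        exact (hN'M ▸ this).symm
    exact hfuniq v (σ v) hMv
  · intro h
    exact absurd (Finset.mem_univ σM) h
end

section
/- Let X be a bipartite mixed graph with a unique perfect matching and H_α its α-hermitian adjacency matrix. For distinct vertices i ≠ j, the (i,j)-entry of H_α⁻¹ equals the sum over all co-augmenting mixed paths P from i to j of (−1)^{(|E(P)|−1)/2} · h_α(P), where h_α(P) is the product of the H_α-entries along consecutive vertices of P; the diagonal entries of H_α⁻¹ are zero. -/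
open SimpleGraph
open scoped Classical

noncomputable section
variable {V : Type*}

/-- edges of a walk, indexed via getVert -/
theorem walk_edges_getElem {G : SimpleGraph V} {u v : V} (p : G.Walk u v) :
    ∀ (i : ℕ) (h : i < p.length),
      p.edges[i]'(by rwa [SimpleGraph.Walk.length_edges]) =
        s(p.getVert i, p.getVert (i+1)) := by
  induction p with
  | nil => intro i h; simp at h
  | cons hadj q ih =>
    intro i h
    cases i with
    | zero => simp [SimpleGraph.Walk.getVert_zero, SimpleGraph.Walk.getVert_cons_succ]
    | succ n =>
      simp only [SimpleGraph.Walk.edges_cons, List.getElem_cons_succ,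
        SimpleGraph.Walk.getVert_cons_succ]
      exact ih n (by simpa [SimpleGraph.Walk.length_cons, Nat.succ_lt_succ_iff] using h)

theorem walk_support_getElem {G : SimpleGraph V} {u v : V} (p : G.Walk u v) :
    ∀ (i : ℕ) (h : i ≤ p.length),
      p.support[i]'(by rw [SimpleGraph.Walk.length_support]; omega) = p.getVert i := by
  induction p with
  | nil =>
    intro i h
    simp only [SimpleGraph.Walk.length_nil, Nat.le_zero] at h
    subst h
    rfl
  | cons hadj q ih =>
    intro i h
    cases i with
    | zero => simp
    | succ n =>
      simp only [SimpleGraph.Walk.support_cons, List.getElem_cons_succ,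
        SimpleGraph.Walk.getVert_cons_succ]
      exact ih n (by simpa [SimpleGraph.Walk.length_cons, Nat.succ_le_succ_iff] using h)

theorem path_getVert_inj {G : SimpleGraph V} {u v : V} {p : G.Walk u v} (hp : p.IsPath)
    {s t : ℕ} (hs : s ≤ p.length) (ht : t ≤ p.length)
    (h : p.getVert s = p.getVert t) : s = t := by
  have hnd := hp.support_nodup
  rw [← walk_support_getElem p s hs, ← walk_support_getElem p t ht] at h
  exact (List.Nodup.getElem_inj_iff hnd).mp h

theorem closed_path_nil {G : SimpleGraph V} {u : V} (p : G.Walk u u) (hp : p.IsPath) :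
    p = SimpleGraph.Walk.nil := by
  cases p with
  | nil => rfl
  | cons h q =>
    rw [SimpleGraph.Walk.cons_isPath_iff] at hp
    exact (hp.2 (SimpleGraph.Walk.end_mem_support q)).elim

theorem halpha_not_adj {X : MixedGraph V} {α : ℂ} {u v : V}
    (h : ¬ X.underlying.Adj u v) : Halpha X α u v = 0 := by
  have h1 : ¬ X.digon u v := fun hd => h (Or.inl hd)
  have h2 : ¬ X.arc u v := fun hd => h (Or.inr (Or.inl hd))
  have h3 : ¬ X.arc v u := fun hd => h (Or.inr (Or.inr hd))
  simp [Halpha, h1, h2, h3]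

theorem halpha_mul_rev {X : MixedGraph V} {α : ℂ} (hα : ‖α‖ = 1) {u v : V}
    (h : X.underlying.Adj u v) : Halpha X α u v * Halpha X α v u = 1 := by
  have hconj : α * (starRingEnd ℂ) α = 1 := by
    rw [Complex.mul_conj, Complex.normSq_eq_norm_sq, hα]
    norm_num
  rcases h with hd | ha | ha
  · have hd' := X.digon_symm u v hd
    simp [Halpha, hd, hd']
  · have h1 : ¬ X.digon u v := fun hh => (X.digon_arc u v hh).1 ha
    have h2 : ¬ X.digon v u := fun hh => (X.digon_arc v u hh).2 ha
    have h3 : ¬ X.arc v u := X.arc_asymm u v ha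
    simp [Halpha, h1, h2, h3, ha, hconj]
  · have h1 : ¬ X.digon u v := fun hh => (X.digon_arc u v hh).2 ha
    have h2 : ¬ X.digon v u := fun hh => (X.digon_arc v u hh).1 ha
    have h3 : ¬ X.arc u v := X.arc_asymm v u ha
    simp [Halpha, h1, h2, h3, ha, mul_comm, hconj]

theorem halpha_ne_zero {X : MixedGraph V} {α : ℂ} (hα : ‖α‖ = 1) {u v : V}
    (h : X.underlying.Adj u v) : Halpha X α u v ≠ 0 := by
  intro h0
  have := halpha_mul_rev hα h
  rw [h0, zero_mul] at this
  exact zero_ne_one this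

theorem even_length_iff_color_eq {G : SimpleGraph V} (C : G.Coloring (Fin 2)) {u v : V}
    (p : G.Walk u v) : Even p.length ↔ C u = C v := by
  induction p with
  | nil => simp
  | @cons u w v h q ih =>
    have hne : C u ≠ C w := C.valid h
    have key : ∀ a b c : Fin 2, a ≠ b → ((¬ b = c) ↔ a = c) := by decide
    rw [SimpleGraph.Walk.length_cons, Nat.even_add_one, ih]
    exact key (C u) (C w) (C v) hne

section Key
variable {G : SimpleGraph V} {M : G.Subgraph} {mf : V → V}

theorem key_lemma
    (huniq : ∀ N : G.Subgraph, N.IsPerfectMatching → N = M)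
    (hmf1 : ∀ v, M.Adj v (mf v)) (hmf2 : ∀ v w, M.Adj v w → w = mf v)
    {x y : V} (p : G.Walk x y) (hp : p.IsPath) (hodd : Odd p.length)
    (halt : ∀ r, r < p.length → (s(p.getVert r, p.getVert (r+1)) ∈ M.edgeSet ↔ Even r))
    (hadj : G.Adj y x) (he : s(y,x) ∉ M.edgeSet) : False := by
  classical
  set n := p.length with hn
  have hn1 : 1 ≤ n := by
    rcases hodd with ⟨m, hm⟩; omega
  have hinj := fun {s t : ℕ} (hs : s ≤ n) (ht : t ≤ n) (h : p.getVert s = p.getVert t) =>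
    path_getVert_inj hp hs ht h
  have hmem_get : ∀ t, t ≤ n → p.getVert t ∈ p.support := fun t ht =>
    SimpleGraph.Walk.mem_support_iff_exists_getVert.mpr ⟨t, rfl, ht⟩
  have hmf_invol : ∀ v, mf (mf v) = v := fun v => ((hmf2 (mf v) v) ((hmf1 v).symm)).symm
  -- matched partner of on-path vertices stays on path
  have hcov : ∀ t, t ≤ n → mf (p.getVert t) ∈ p.support := by
    intro t ht
    rcases Nat.even_or_odd t with hev | hod
    · have htn : t < n := by
        rcases hodd with ⟨m, hm⟩; rcases hev with ⟨c, hc⟩; omega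
      have := (halt t htn).mpr hev
      rw [SimpleGraph.Subgraph.mem_edgeSet] at this
      rw [← hmf2 _ _ this]
      exact hmem_get (t+1) htn
    · have ht1 : 1 ≤ t := by rcases hod with ⟨c, hc⟩; omega
      have hev' : Even (t-1) := by
        rcases hod with ⟨c, hc⟩; exact ⟨c, by omega⟩
      have htn : t - 1 < n := by omega
      have := (halt (t-1) htn).mpr hev'
      rw [SimpleGraph.Subgraph.mem_edgeSet] at this
      have h2 : (t-1)+1 = t := by omega
      rw [h2] at this
      rw [← hmf2 _ _ this.symm]
      exact hmem_get (t-1) (by omega)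
  have hoff : ∀ v, v ∉ p.support → mf v ∉ p.support := by
    intro v hv hmem
    obtain ⟨t, hgt, ht⟩ := SimpleGraph.Walk.mem_support_iff_exists_getVert.mp hmem
    have := hcov t ht
    rw [hgt, hmf_invol] at this
    exact hv this
  have hxyne : x ≠ y := by
    intro h
    subst h
    rw [closed_path_nil p hp] at hn
    simp [hn] at hn1
  -- the swapped matching
  set N : G.Subgraph :=
    { verts := Set.univ
      Adj := fun a b =>
        (M.Adj a b ∧ a ∉ p.support ∧ b ∉ p.support) ∨
        (∃ r, r < n ∧ Odd r ∧ s(a,b) = s(p.getVert r, p.getVert (r+1))) ∨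
        s(a,b) = s(x,y)
      adj_sub := by
        rintro a b (⟨h,_,_⟩ | ⟨r, hr, _, hs⟩ | hs)
        · exact M.adj_sub h
        · exact G.mem_edgeSet.mp (by rw [hs]; exact G.mem_edgeSet.mpr (p.adj_getVert_succ hr))
        · exact G.mem_edgeSet.mp (by rw [hs]; exact G.mem_edgeSet.mpr hadj.symm)
      edge_vert := fun _ => Set.mem_univ _
      symm := by
        constructor
        rintro a b (⟨h, ha, hb⟩ | ⟨r, hr, ho, hs⟩ | hs)
        · exact Or.inl ⟨h.symm, hb, ha⟩
        · exact Or.inr (Or.inl ⟨r, hr, ho, by rw [Sym2.eq_swap] at hs; exact hs⟩)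
        · exact Or.inr (Or.inr (by rw [Sym2.eq_swap] at hs; exact hs)) } with hN
  have hNpm : N.IsPerfectMatching := by
    constructor
    · intro v _
      by_cases hv : v ∈ p.support
      · obtain ⟨t, hgv, ht⟩ := SimpleGraph.Walk.mem_support_iff_exists_getVert.mp hv
        -- the new partner
        refine ⟨if t = 0 then y else if Even t then p.getVert (t-1)
                else if t = n then x else p.getVert (t+1), ?_, ?_⟩
        · -- existence
          by_cases ht0 : t = 0
          · subst ht0
            simp only [if_pos rfl]
            refine Or.inr (Or.inr ?_)
            rw [← hgv]
            simp [SimpleGraph.Walk.getVert_zero]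
          · rcases Nat.even_or_odd t with hev | hod
            · simp only [if_neg ht0, if_pos hev]
              refine Or.inr (Or.inl ⟨t-1, by omega, ?_, ?_⟩)
              · rw [Nat.odd_iff]; rw [Nat.even_iff] at hev; omega
              · have h2 : (t-1)+1 = t := by omega
                rw [h2, ← hgv, Sym2.eq_swap]
            · have hnev : ¬ Even t := by rw [Nat.even_iff]; rw [Nat.odd_iff] at hod; omega
              by_cases htn : t = n
              · simp only [if_neg ht0, if_neg hnev, if_pos htn]
                refine Or.inr (Or.inr ?_)
                rw [← hgv, htn]
                have : p.getVert n = y := p.getVert_length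
                rw [this, Sym2.eq_swap]
              · simp only [if_neg ht0, if_neg hnev, if_neg htn]
                exact Or.inr (Or.inl ⟨t, by omega, hod, by rw [← hgv]⟩)
        · -- uniqueness
          rintro w' (⟨hMa, hva, _⟩ | ⟨r, hr, hro, hs⟩ | hs)
          · exact absurd hv hva
          · rw [Sym2.eq_iff] at hs
            rcases hs with ⟨hva, hwb⟩ | ⟨hva, hwb⟩
            · have htr : t = r := hinj ht (by omega) (by rw [hgv, hva])
              subst htr
              have hnev : ¬ Even t := by rw [Nat.even_iff]; rw [Nat.odd_iff] at hro; omega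
              have ht0 : t ≠ 0 := by rw [Nat.odd_iff] at hro; omega
              have htn : t ≠ n := by omega
              simp [if_neg ht0, if_neg hnev, if_neg htn, hwb]
            · have htr : t = r + 1 := hinj ht (by omega) (by rw [hgv, hva])
              subst htr
              have hev : Even (r+1) := by rw [Nat.even_iff]; rw [Nat.odd_iff] at hro; omega
              have ht0 : r + 1 ≠ 0 := by omega
              simp [if_neg ht0, if_pos hev, hwb]
          · rw [Sym2.eq_iff] at hs
            rcases hs with ⟨hva, hwb⟩ | ⟨hva, hwb⟩
            · have ht0 : t = 0 := hinj ht (by omega) (by rw [hgv, hva]; exact p.getVert_zero.symm)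
              simp [ht0, hwb]
            · have htn : t = n := by
                refine hinj ht (le_refl n) ?_
                rw [hgv, hva]
                exact p.getVert_length.symm
              have ht0 : t ≠ 0 := by omega
              have hnev : ¬ Even t := by
                rcases hodd with ⟨m, hm⟩; rw [Nat.even_iff]; omega
              simp [if_neg ht0, if_neg hnev, if_pos htn, hwb]
      · refine ⟨mf v, Or.inl ⟨hmf1 v, hv, hoff v hv⟩, ?_⟩
        rintro w' (⟨hMa, _, _⟩ | ⟨r, hr, hro, hs⟩ | hs)
        · exact hmf2 _ _ hMa
        · rw [Sym2.eq_iff] at hs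
          rcases hs with ⟨hva, _⟩ | ⟨hva, _⟩
          · exact absurd (hva ▸ hmem_get r (by omega)) hv
          · exact absurd (hva ▸ hmem_get (r+1) (by omega)) hv
        · rw [Sym2.eq_iff] at hs
          rcases hs with ⟨hva, _⟩ | ⟨hva, _⟩
          · exact absurd (hva ▸ p.start_mem_support) hv
          · exact absurd (hva ▸ p.end_mem_support) hv
    · intro v
      exact Set.mem_univ v
  have hNM := huniq N hNpm
  have hNxy : N.Adj x y := Or.inr (Or.inr rfl)
  rw [hNM] at hNxy
  exact he (SimpleGraph.Subgraph.mem_edgeSet.mpr hNxy.symm)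

end Key

section Key2
variable {G : SimpleGraph V} {M : G.Subgraph} {mf : V → V}

theorem madj_unique (hmf2 : ∀ v w, M.Adj v w → w = mf v) {a b c : V}
    (h1 : M.Adj a b) (h2 : M.Adj a c) : b = c := by
  rw [hmf2 a b h1, hmf2 a c h2]

theorem not_mem_support_of_adj
    (huniq : ∀ N : G.Subgraph, N.IsPerfectMatching → N = M)
    (hmf1 : ∀ v, M.Adj v (mf v)) (hmf2 : ∀ v w, M.Adj v w → w = mf v)
    (C : G.Coloring (Fin 2))
    {i j k : V} (p : G.Walk j k) (hp : p.IsPath) (hodd : Odd p.length)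
    (halt : ∀ r, r < p.length → (s(p.getVert r, p.getVert (r+1)) ∈ M.edgeSet ↔ Even r))
    (hadj : G.Adj i j) (hnm : s(i,j) ∉ M.edgeSet) : i ∉ p.support := by
  intro hmem
  set p₁ := p.takeUntil i hmem with hp₁def
  have hp₁ : p₁.IsPath := hp.takeUntil hmem
  set m := p₁.length with hm
  have hmn : m ≤ p.length := SimpleGraph.Walk.length_takeUntil_le p hmem
  have hspec := p.take_spec hmem
  have hagree : ∀ r, r ≤ m → p₁.getVert r = p.getVert r := by
    intro r hr
    conv_rhs => rw [← hspec]
    rw [SimpleGraph.Walk.getVert_append]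
    rcases lt_or_eq_of_le hr with hlt | heq
    · rw [if_pos hlt]
    · subst heq
      rw [if_neg (lt_irrefl _), Nat.sub_self]
      rw [SimpleGraph.Walk.getVert_zero]
      exact p₁.getVert_length
  have hm1 : 1 ≤ m := by
    by_contra h
    have hm0 : m = 0 := by omega
    have : j = i := by
      have h1 : p₁.getVert 0 = j := p₁.getVert_zero
      have h2 : p₁.getVert m = i := p₁.getVert_length
      rw [hm0] at h2
      rw [h1] at h2; exact h2
    exact hadj.ne this.symm
  have halt₁ : ∀ r, r < m → (s(p₁.getVert r, p₁.getVert (r+1)) ∈ M.edgeSet ↔ Even r) := by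
    intro r hr
    rw [hagree r (by omega), hagree (r+1) (by omega)]
    exact halt r (by omega)
  rcases Nat.even_or_odd m with hev | hod
  · have := (even_length_iff_color_eq C p₁).mp hev
    exact C.valid hadj this.symm
  · exact key_lemma huniq hmf1 hmf2 p₁ hp₁ hod halt₁ hadj hnm

theorem mf_not_mem_support
    (hmf1 : ∀ v, M.Adj v (mf v)) (hmf2 : ∀ v w, M.Adj v w → w = mf v)
    {i k : V} (q : G.Walk i k) (hq : q.IsPath) (hlen : 0 < q.length) (heven : Even q.length)
    (haltN : ∀ r, r < q.length → (s(q.getVert r, q.getVert (r+1)) ∈ M.edgeSet ↔ Odd r)) :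
    mf i ∉ q.support := by
  intro hmem
  set n := q.length with hn
  have hn2 : 2 ≤ n := by rcases heven with ⟨c, hc⟩; omega
  obtain ⟨t, hgt, ht⟩ := SimpleGraph.Walk.mem_support_iff_exists_getVert.mp hmem
  have hinj := fun {s t : ℕ} (hs : s ≤ n) (ht : t ≤ n) (h : q.getVert s = q.getVert t) =>
    path_getVert_inj hq hs ht h
  have hMi : M.Adj i (mf i) := hmf1 i
  by_cases ht0 : t = 0
  · subst ht0
    rw [q.getVert_zero] at hgt
    have hGi : G.Adj i (mf i) := M.adj_sub hMi
    rw [← hgt] at hGi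
    exact G.loopless.irrefl i hGi
  · by_cases htn : t = n
    · have hmfk : mf i = k := by rw [← hgt, htn]; exact q.getVert_length
      have hodd' : Odd (n-1) := by rcases heven with ⟨c, hc⟩; exact ⟨c-1, by omega⟩
      have hE := (haltN (n-1) (by omega)).mpr hodd'
      rw [SimpleGraph.Subgraph.mem_edgeSet] at hE
      have h2 : (n-1)+1 = n := by omega
      rw [h2, q.getVert_length] at hE
      have hMk : M.Adj k i := by rw [← hmfk]; exact hMi.symm
      have := madj_unique hmf2 hE.symm hMk
      have h0 : q.getVert (n-1) = q.getVert 0 := by rw [this, q.getVert_zero]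
      have := hinj (by omega) (by omega) h0
      omega
    · rcases Nat.even_or_odd t with hev | hod
      · have ht1 : t ≠ 1 := by rw [Nat.even_iff] at hev; omega
        have hodd' : Odd (t-1) := by
          rcases hev with ⟨c, hc⟩; exact ⟨c-1, by omega⟩
        have hE := (haltN (t-1) (by omega)).mpr hodd'
        rw [SimpleGraph.Subgraph.mem_edgeSet] at hE
        have h2 : (t-1)+1 = t := by omega
        rw [h2, hgt] at hE
        have := madj_unique hmf2 hE.symm hMi.symm
        have h0 : q.getVert (t-1) = q.getVert 0 := by rw [this, q.getVert_zero]
        have := hinj (by omega) (by omega) h0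
        omega
      · have hE := (haltN t (by omega)).mpr hod
        rw [SimpleGraph.Subgraph.mem_edgeSet] at hE
        rw [hgt] at hE
        have := madj_unique hmf2 hE hMi.symm
        have h0 : q.getVert (t+1) = q.getVert 0 := by rw [this, q.getVert_zero]
        have := hinj (by omega) (by omega) h0
        omega

end Key2

theorem hWalk_nil {X : MixedGraph V} {α : ℂ} {u : V} :
    hWalk X α (SimpleGraph.Walk.nil : X.underlying.Walk u u) = 1 := by simp [hWalk]

theorem hWalk_cons {X : MixedGraph V} {α : ℂ} {u v w : V} (h : X.underlying.Adj u v)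
    (p : X.underlying.Walk v w) :
    hWalk X α (SimpleGraph.Walk.cons h p) = Halpha X α u v * hWalk X α p := by
  simp [hWalk]

/-- getVert-based characterization of co-augmenting paths. -/
abbrev CAgv {G : SimpleGraph V} (Ms : Set (Sym2 V)) {u v : V} (p : G.Walk u v) : Prop :=
  p.IsPath ∧ Odd p.length ∧
    ∀ r, r < p.length → (s(p.getVert r, p.getVert (r+1)) ∈ Ms ↔ Even r)

theorem isCoAugmenting_iff {G : SimpleGraph V} (Ms : Set (Sym2 V)) {u v : V} (p : G.Walk u v) :
    IsCoAugmenting G Ms p ↔ CAgv Ms p := by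
  unfold IsCoAugmenting CAgv
  refine and_congr_right fun _ => ?_
  constructor
  · rintro ⟨h1, h2⟩
    refine ⟨by rwa [SimpleGraph.Walk.length_edges] at h1, fun r hr => ?_⟩
    have := h2 ⟨r, by rwa [SimpleGraph.Walk.length_edges]⟩
    rwa [List.get_eq_getElem, walk_edges_getElem p r hr] at this
  · rintro ⟨h1, h2⟩
    refine ⟨by rwa [SimpleGraph.Walk.length_edges], fun i => ?_⟩
    have hi : (i : ℕ) < p.length := by
      have h3 := i.2
      have h4 := p.length_edges
      omega
    rw [List.get_eq_getElem, walk_edges_getElem p i hi]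
    exact h2 i hi

theorem coaug_finite [Fintype V] [DecidableEq V] {G : SimpleGraph V} (Ms : Set (Sym2 V))
    (u v : V) : {p : G.Walk u v | IsCoAugmenting G Ms p}.Finite := by
  have hsub : {p : G.Walk u v | IsCoAugmenting G Ms p} ⊆ {p | p.length < Fintype.card V} :=
    fun p hp => hp.1.length_lt
  exact Set.Finite.subset (Set.toFinite _) hsub


def strip2 {G : SimpleGraph V} {k : V} : (Σ j : V, G.Walk j k) → (Σ j : V, G.Walk j k)
  | ⟨_, SimpleGraph.Walk.cons _ (SimpleGraph.Walk.cons _ p₂)⟩ => ⟨_, p₂⟩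
  | s => s

@[simp] theorem strip2_cons {G : SimpleGraph V} {j w1 w2 k : V} (h : G.Adj j w1)
    (h' : G.Adj w1 w2) (p₂ : G.Walk w2 k) :
    strip2 ⟨j, SimpleGraph.Walk.cons h (SimpleGraph.Walk.cons h' p₂)⟩ = ⟨w2, p₂⟩ := rfl


end
/-- Entry formula for the inverse of the α-hermitian adjacency matrix of a bipartite
mixed graph with a unique perfect matching: a sum over co-augmenting paths. -/
theorem stmt8 {V : Type*} [Fintype V] [DecidableEq V]
    (X : MixedGraph V) (α : ℂ) (hα : ‖α‖ = 1)
    (hbip : X.underlying.Colorable 2)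
    (M : X.underlying.Subgraph) (hM : M.IsPerfectMatching)
    (huniq : ∀ N : X.underlying.Subgraph, N.IsPerfectMatching → N = M) :
    (∀ i j : V, i ≠ j →
      (Halpha X α)⁻¹ i j =
        ∑ᶠ p ∈ {p : X.underlying.Walk i j | IsCoAugmenting X.underlying M.edgeSet p},
          (-1 : ℂ) ^ ((p.length - 1) / 2) * hWalk X α p) ∧
    (∀ i : V, (Halpha X α)⁻¹ i i = 0) := by
  classical
  obtain ⟨C⟩ := hbip
  choose mf hmf1 hmf2 using fun v => (hM.1 (hM.2 v))
  have hmfadjG : ∀ v, X.underlying.Adj v (mf v) := fun v => M.adj_sub (hmf1 v)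
  have hmfne : ∀ v, mf v ≠ v := fun v h => by
    have hG := hmfadjG v
    rw [h] at hG
    exact X.underlying.loopless.irrefl v hG
  have hfin : ∀ a b : V,
      {p : X.underlying.Walk a b | IsCoAugmenting X.underlying M.edgeSet p}.Finite :=
    fun a b => coaug_finite _ a b
  set Nmat : Matrix V V ℂ := fun a b =>
    ∑ᶠ p ∈ {p : X.underlying.Walk a b | IsCoAugmenting X.underlying M.edgeSet p},
      (-1 : ℂ) ^ ((p.length - 1) / 2) * hWalk X α p with hNmat
  have hNpt : ∀ a b : V, Nmat a b =
      ∑ᶠ p ∈ {p : X.underlying.Walk a b | IsCoAugmenting X.underlying M.edgeSet p},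
        (-1 : ℂ) ^ ((p.length - 1) / 2) * hWalk X α p :=
    fun a b => congrFun (congrFun hNmat a) b
  have hNentry : ∀ a b : V, Nmat a b =
      ∑ p ∈ (hfin a b).toFinset, (-1 : ℂ) ^ ((p.length - 1) / 2) * hWalk X α p := by
    intro a b
    rw [hNpt]
    exact finsum_mem_eq_finite_toFinset_sum _ (hfin a b)
  have hmain : Halpha X α * Nmat = 1 := by
    ext i k
    rw [Matrix.mul_apply, Matrix.one_apply]
    set F : ∀ j : V, X.underlying.Walk j k → ℂ := fun j p =>
      Halpha X α i j * ((-1 : ℂ) ^ ((p.length - 1) / 2) * hWalk X α p) with hF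
    set T : Finset (Σ j : V, X.underlying.Walk j k) :=
      Finset.univ.sigma (fun j => (hfin j k).toFinset) with hT
    have hmemT : ∀ s : (Σ j : V, X.underlying.Walk j k),
        s ∈ T ↔ CAgv M.edgeSet s.2 := by
      intro s
      rw [hT, Finset.mem_sigma, Set.Finite.mem_toFinset, Set.mem_setOf_eq,
        isCoAugmenting_iff]
      simp
    have hsum : (∑ j, Halpha X α i j * Nmat j k) = ∑ s ∈ T, F s.1 s.2 :=
      calc (∑ j, Halpha X α i j * Nmat j k)
          = ∑ j, ∑ p ∈ (hfin j k).toFinset, F j p :=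
            Finset.sum_congr rfl fun j _ => by rw [hNentry, Finset.mul_sum, hF]
        _ = ∑ s ∈ T, F s.1 s.2 := by
            rw [hT]
            exact Finset.sum_sigma' Finset.univ (fun j => (hfin j k).toFinset) F
    rw [hsum]
    by_cases hik : i = k
    · subst hik
      rw [if_pos rfl]
      set s₀ : Σ j : V, X.underlying.Walk j i :=
        ⟨mf i, SimpleGraph.Walk.cons (hmfadjG i).symm SimpleGraph.Walk.nil⟩ with hs₀
      have hmem0 : s₀ ∈ T := by
        rw [hmemT]
        show CAgv M.edgeSet (SimpleGraph.Walk.cons (hmfadjG i).symm SimpleGraph.Walk.nil)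
        refine ⟨?_, ⟨0, rfl⟩, ?_⟩
        · rw [SimpleGraph.Walk.cons_isPath_iff]
          exact ⟨SimpleGraph.Walk.IsPath.nil, by simpa using hmfne i⟩
        · intro r hr
          have hl : (SimpleGraph.Walk.cons (hmfadjG i).symm
              (SimpleGraph.Walk.nil : X.underlying.Walk i i)).length = 1 := rfl
          have hr0 : r = 0 := by omega
          subst hr0
          simp only [SimpleGraph.Walk.getVert_cons_succ, SimpleGraph.Walk.getVert_zero]
          simp only [Even.zero, iff_true]
          exact SimpleGraph.Subgraph.mem_edgeSet.mpr (hmf1 i).symm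
      have hzero : ∀ b ∈ T, b ≠ s₀ → F b.1 b.2 = 0 := by
        rintro ⟨j, p⟩ hb hne
        rw [hmemT] at hb
        obtain ⟨hp, hodd, halt⟩ := hb
        by_cases hadj : X.underlying.Adj i j
        · by_cases hmm : s(i, j) ∈ M.edgeSet
          · exfalso
            apply hne
            have hMij : M.Adj i j := SimpleGraph.Subgraph.mem_edgeSet.mp hmm
            have hj : j = mf i := hmf2 i j hMij
            cases p with
            | nil => simp at hodd
            | @cons _ w _ h rest =>
              have h0 : s((SimpleGraph.Walk.cons h rest).getVert 0,
                  (SimpleGraph.Walk.cons h rest).getVert 1) ∈ M.edgeSet :=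
                (halt 0 (by simp)).mpr Even.zero
              simp only [SimpleGraph.Walk.getVert_cons_succ,
                SimpleGraph.Walk.getVert_zero] at h0
              have hw : w = mf j := hmf2 j w (SimpleGraph.Subgraph.mem_edgeSet.mp h0)
              have hmfj : i = mf j := hmf2 j i hMij.symm
              have hwi : w = i := by rw [hw, ← hmfj]
              subst hwi
              have hrest : rest = SimpleGraph.Walk.nil :=
                closed_path_nil rest ((SimpleGraph.Walk.cons_isPath_iff _ _).mp hp).1
              subst hrest
              subst hj
              rfl
          · exfalso
            exact not_mem_support_of_adj huniq hmf1 hmf2 C p hp hodd halt hadj hmm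
              p.end_mem_support
        · simp only [hF]
          rw [halpha_not_adj hadj, zero_mul]
      rw [Finset.sum_eq_single_of_mem s₀ hmem0 hzero]
      show F (mf i) (SimpleGraph.Walk.cons (hmfadjG i).symm SimpleGraph.Walk.nil) = 1
      simp only [hF]
      rw [hWalk_cons, hWalk_nil]
      have h11 := halpha_mul_rev hα (hmfadjG i)
      have hlen : ((SimpleGraph.Walk.cons (hmfadjG i).symm
          (SimpleGraph.Walk.nil : X.underlying.Walk i i)).length - 1) / 2 = 0 := by
        norm_num
      rw [hlen, pow_zero]
      linear_combination h11
    · rw [if_neg hik]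
      -- structure of A-type terms
      have hA : ∀ (j : V) (p : X.underlying.Walk j k), CAgv M.edgeSet p →
          s(i, j) ∈ M.edgeSet →
          ∃ (w2 : V) (h : X.underlying.Adj j i) (h' : X.underlying.Adj i w2)
            (p₂ : X.underlying.Walk w2 k),
            p = SimpleGraph.Walk.cons h (SimpleGraph.Walk.cons h' p₂) ∧
            CAgv M.edgeSet p₂ ∧ s(i, w2) ∉ M.edgeSet ∧ j = mf i := by
        intro j p hca hmm
        obtain ⟨hp, hodd, halt⟩ := hca
        have hMij : M.Adj i j := SimpleGraph.Subgraph.mem_edgeSet.mp hmm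
        have hj : j = mf i := hmf2 i j hMij
        cases p with
        | nil => simp at hodd
        | @cons _ w _ h rest =>
          have h0 : s((SimpleGraph.Walk.cons h rest).getVert 0,
              (SimpleGraph.Walk.cons h rest).getVert 1) ∈ M.edgeSet :=
            (halt 0 (by simp)).mpr Even.zero
          simp only [SimpleGraph.Walk.getVert_cons_succ,
            SimpleGraph.Walk.getVert_zero] at h0
          have hw : w = mf j := hmf2 j w (SimpleGraph.Subgraph.mem_edgeSet.mp h0)
          have hmfj : i = mf j := hmf2 j i hMij.symm
          have hwi : w = i := by rw [hw, ← hmfj]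
          subst hwi
          cases rest with
          | nil => exact absurd rfl hik
          | @cons _ w2 _ h' p₂ =>
            refine ⟨w2, h, h', p₂, rfl, ⟨?_, ?_, ?_⟩, ?_, hj⟩
            · exact (((SimpleGraph.Walk.cons_isPath_iff _ _).mp
                (((SimpleGraph.Walk.cons_isPath_iff _ _).mp hp).1)).1)
            · have hl : (SimpleGraph.Walk.cons h
                  (SimpleGraph.Walk.cons h' p₂)).length = p₂.length + 2 := by
                simp [SimpleGraph.Walk.length_cons]
              rw [hl, Nat.odd_iff] at hodd
              rw [Nat.odd_iff]
              omega
            · intro r hr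
              have := halt (r + 1 + 1) (by simp [SimpleGraph.Walk.length_cons]; omega)
              simp only [SimpleGraph.Walk.getVert_cons_succ] at this
              rw [this]
              rw [Nat.even_iff, Nat.even_iff]
              omega
            · intro hmem
              have h1 := (halt 1 (by simp [SimpleGraph.Walk.length_cons])).mp
              simp only [SimpleGraph.Walk.getVert_cons_succ,
                SimpleGraph.Walk.getVert_zero] at h1
              have := h1 hmem
              simp at this
      set g0 : (Σ j : V, X.underlying.Walk j k) → (Σ j : V, X.underlying.Walk j k) :=
        fun s =>
          if hmm : s(i, s.1) ∈ M.edgeSet then strip2 s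
          else if hadj : X.underlying.Adj i s.1 then
            ⟨mf i, SimpleGraph.Walk.cons (hmfadjG i).symm (SimpleGraph.Walk.cons hadj s.2)⟩
          else s
        with hg0
      -- facts about B-type extension
      have hBfact : ∀ (j : V) (p : X.underlying.Walk j k) (hadj : X.underlying.Adj i j),
          CAgv M.edgeSet p → s(i, j) ∉ M.edgeSet →
          CAgv M.edgeSet (SimpleGraph.Walk.cons (hmfadjG i).symm
            (SimpleGraph.Walk.cons hadj p)) := by
        intro j p hadj hca hmm
        obtain ⟨hp, hodd, halt⟩ := hca
        have hi_notin : i ∉ p.support :=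
          not_mem_support_of_adj huniq hmf1 hmf2 C p hp hodd halt hadj hmm
        have hqpath : (SimpleGraph.Walk.cons hadj p).IsPath :=
          (SimpleGraph.Walk.cons_isPath_iff _ _).mpr ⟨hp, hi_notin⟩
        have haltN : ∀ r, r < (SimpleGraph.Walk.cons hadj p).length →
            (s((SimpleGraph.Walk.cons hadj p).getVert r,
               (SimpleGraph.Walk.cons hadj p).getVert (r+1)) ∈ M.edgeSet ↔ Odd r) := by
          intro r hr
          cases r with
          | zero =>
            simp only [SimpleGraph.Walk.getVert_cons_succ, SimpleGraph.Walk.getVert_zero]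
            simp only [← Nat.not_even_iff_odd, Even.zero, not_true, iff_false]
            exact fun hc => hmm hc
          | succ n =>
            simp only [SimpleGraph.Walk.getVert_cons_succ]
            have := halt n (by simp [SimpleGraph.Walk.length_cons] at hr; omega)
            rw [this, Nat.even_iff, Nat.odd_iff]
            omega
        have hmf_notin : mf i ∉ (SimpleGraph.Walk.cons hadj p).support :=
          mf_not_mem_support hmf1 hmf2 _ hqpath
            (by simp [SimpleGraph.Walk.length_cons])
            (by rw [SimpleGraph.Walk.length_cons, Nat.even_iff]
                rw [Nat.odd_iff] at hodd
                omega)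
            haltN
        refine ⟨(SimpleGraph.Walk.cons_isPath_iff _ _).mpr ⟨hqpath, hmf_notin⟩, ?_, ?_⟩
        · rw [SimpleGraph.Walk.length_cons, SimpleGraph.Walk.length_cons,
            Nat.odd_iff]
          rw [Nat.odd_iff] at hodd
          omega
        · intro r hr
          cases r with
          | zero =>
            simp only [SimpleGraph.Walk.getVert_cons_succ, SimpleGraph.Walk.getVert_zero]
            simp only [Even.zero, iff_true]
            exact SimpleGraph.Subgraph.mem_edgeSet.mpr (hmf1 i).symm
          | succ n =>
            simp only [SimpleGraph.Walk.getVert_cons_succ]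
            have := haltN n (by simp [SimpleGraph.Walk.length_cons] at hr ⊢; omega)
            simp only [SimpleGraph.Walk.getVert_cons_succ] at this
            rw [this, Nat.even_iff, Nat.odd_iff]
            omega
      refine Finset.sum_involution (fun s _ => g0 s) ?_ ?_ (fun s hs => ?_) ?_
      · -- sums to zero
        rintro ⟨j, p⟩ hs
        dsimp only
        rw [hmemT] at hs
        by_cases hmm : s(i, j) ∈ M.edgeSet
        · obtain ⟨w2, h, h', p₂, hpe, hca₂, hnm₂, hj⟩ := hA j p hs hmm
          subst hpe
          have hred : g0 ⟨j, SimpleGraph.Walk.cons h (SimpleGraph.Walk.cons h' p₂)⟩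
              = ⟨w2, p₂⟩ := by
            rw [hg0]
            simp only [dif_pos hmm]
            exact strip2_cons h h' p₂
          rw [hred]
          simp only [hF]
          rw [hWalk_cons, hWalk_cons]
          have hlen : ((SimpleGraph.Walk.cons h (SimpleGraph.Walk.cons h' p₂)).length - 1) / 2
              = (p₂.length - 1) / 2 + 1 := by
            have hl : (SimpleGraph.Walk.cons h
                (SimpleGraph.Walk.cons h' p₂)).length = p₂.length + 2 := by
              simp [SimpleGraph.Walk.length_cons]
            obtain ⟨m, hm⟩ := hca₂.2.1
            rw [hl]
            omega
          rw [hlen, pow_succ]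
          have h11 := halpha_mul_rev hα (M.adj_sub (SimpleGraph.Subgraph.mem_edgeSet.mp hmm))
          linear_combination (-(((-1 : ℂ) ^ ((p₂.length - 1) / 2)) *
            (Halpha X α i w2 * hWalk X α p₂))) * h11
        · by_cases hadj : X.underlying.Adj i j
          · have hred : g0 ⟨j, p⟩ = ⟨mf i, SimpleGraph.Walk.cons (hmfadjG i).symm
                (SimpleGraph.Walk.cons hadj p)⟩ := by
              rw [hg0]
              simp only [dif_neg hmm, dif_pos hadj]
            rw [hred]
            simp only [hF]
            rw [hWalk_cons, hWalk_cons]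
            have hlen : ((SimpleGraph.Walk.cons (hmfadjG i).symm
                (SimpleGraph.Walk.cons hadj p)).length - 1) / 2
                = (p.length - 1) / 2 + 1 := by
              have hl : (SimpleGraph.Walk.cons (hmfadjG i).symm
                  (SimpleGraph.Walk.cons hadj p)).length = p.length + 2 := by
                simp [SimpleGraph.Walk.length_cons]
              have hodd' : Odd p.length := hs.2.1
              obtain ⟨m, hm⟩ := hodd'
              rw [hl]
              omega
            rw [hlen, pow_succ]
            have h11 := halpha_mul_rev hα (hmfadjG i)
            linear_combination (-(((-1 : ℂ) ^ ((p.length - 1) / 2)) *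
              (Halpha X α i j * hWalk X α p))) * h11
          · have hred : g0 ⟨j, p⟩ = ⟨j, p⟩ := by
              rw [hg0]
              simp only [dif_neg hmm, dif_neg hadj]
            rw [hred]
            simp only [hF]
            rw [halpha_not_adj hadj, zero_mul, add_zero]
      · -- ne
        rintro ⟨j, p⟩ hs hne
        rw [hmemT] at hs
        intro hcontra
        by_cases hmm : s(i, j) ∈ M.edgeSet
        · obtain ⟨w2, h, h', p₂, hpe, hca₂, hnm₂, hj⟩ := hA j p hs hmm
          subst hpe
          have hred : g0 ⟨j, SimpleGraph.Walk.cons h (SimpleGraph.Walk.cons h' p₂)⟩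
              = ⟨w2, p₂⟩ := by
            rw [hg0]
            simp only [dif_pos hmm]
            exact strip2_cons h h' p₂
          rw [hred] at hcontra
          have := congrArg (fun s : (Σ j : V, X.underlying.Walk j k) => s.2.length) hcontra
          simp only [SimpleGraph.Walk.length_cons] at this
          omega
        · by_cases hadj : X.underlying.Adj i j
          · have hred : g0 ⟨j, p⟩ = ⟨mf i, SimpleGraph.Walk.cons (hmfadjG i).symm
                (SimpleGraph.Walk.cons hadj p)⟩ := by
              rw [hg0]
              simp only [dif_neg hmm, dif_pos hadj]
            rw [hred] at hcontra
            have := congrArg (fun s : (Σ j : V, X.underlying.Walk j k) => s.2.length) hcontra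
            simp only [SimpleGraph.Walk.length_cons] at this
            omega
          · apply hne
            simp only [hF]
            rw [halpha_not_adj hadj, zero_mul]
      · -- mem
        obtain ⟨j, p⟩ := s
        rw [hmemT] at hs
        by_cases hmm : s(i, j) ∈ M.edgeSet
        · obtain ⟨w2, h, h', p₂, hpe, hca₂, hnm₂, hj⟩ := hA j p hs hmm
          subst hpe
          have hred : g0 ⟨j, SimpleGraph.Walk.cons h (SimpleGraph.Walk.cons h' p₂)⟩
              = ⟨w2, p₂⟩ := by
            rw [hg0]
            simp only [dif_pos hmm]
            exact strip2_cons h h' p₂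
          rw [hred, hmemT]
          exact hca₂
        · by_cases hadj : X.underlying.Adj i j
          · have hred : g0 ⟨j, p⟩ = ⟨mf i, SimpleGraph.Walk.cons (hmfadjG i).symm
                (SimpleGraph.Walk.cons hadj p)⟩ := by
              rw [hg0]
              simp only [dif_neg hmm, dif_pos hadj]
            rw [hred, hmemT]
            exact hBfact j p hadj hs hmm
          · have hred : g0 ⟨j, p⟩ = ⟨j, p⟩ := by
              rw [hg0]
              simp only [dif_neg hmm, dif_neg hadj]
            rw [hred, hmemT]
            exact hs
      · -- involution
        rintro ⟨j, p⟩ hs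
        rw [hmemT] at hs
        by_cases hmm : s(i, j) ∈ M.edgeSet
        · obtain ⟨w2, h, h', p₂, hpe, hca₂, hnm₂, hj⟩ := hA j p hs hmm
          subst hpe
          have hred : g0 ⟨j, SimpleGraph.Walk.cons h (SimpleGraph.Walk.cons h' p₂)⟩
              = ⟨w2, p₂⟩ := by
            rw [hg0]
            simp only [dif_pos hmm]
            exact strip2_cons h h' p₂
          simp only [hred]
          rw [hg0]
          simp only [dif_neg hnm₂, dif_pos h']
          subst hj
          rfl
        · by_cases hadj : X.underlying.Adj i j
          · have hred : g0 ⟨j, p⟩ = ⟨mf i, SimpleGraph.Walk.cons (hmfadjG i).symm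
                (SimpleGraph.Walk.cons hadj p)⟩ := by
              rw [hg0]
              simp only [dif_neg hmm, dif_pos hadj]
            simp only [hred]
            rw [hg0]
            have hmm2 : s(i, mf i) ∈ M.edgeSet :=
              SimpleGraph.Subgraph.mem_edgeSet.mpr (hmf1 i)
            simp only [dif_pos hmm2]
            exact strip2_cons (hmfadjG i).symm hadj p
          · have hred : g0 ⟨j, p⟩ = ⟨j, p⟩ := by
              rw [hg0]
              simp only [dif_neg hmm, dif_neg hadj]
            simp only [hred]
  have hinv : (Halpha X α)⁻¹ = Nmat := Matrix.inv_eq_right_inv hmain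
  constructor
  · intro i j _
    rw [hinv]
  · intro i
    rw [hinv, hNpt]
    have hempty : {p : X.underlying.Walk i i | IsCoAugmenting X.underlying M.edgeSet p}
        = ∅ := by
      ext p
      simp only [Set.mem_setOf_eq, Set.mem_empty_iff_false, iff_false]
      intro hco
      rw [isCoAugmenting_iff] at hco
      obtain ⟨hp, hodd, _⟩ := hco
      rw [closed_path_nil p hp] at hodd
      simp at hodd
    rw [hempty, finsum_mem_empty]
end

section
/- Let G be a bipartite graph with unique perfect matching M such that every cycle of G has an even number of non-matching edges. Fix a base vertex u and define w : V(G) → {1, −1} by w(v) = f_W(v) for any path W from u to v (well-defined by the hypothesis), and let D_u be the diagonal {±1}-matrix with entries w(v). Then D_u · A(G) · D_u = H_{−1}(X_G), where A(G) is the adjacency matrix of G and H_{−1}(X_G) is the (−1)-hermitian adjacency matrix of the mixed graph X_G obtained by orienting all non-matching edges of G. -/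
open SimpleGraph
open scoped Classical

section Aux

open SimpleGraph
open scoped Classical

variable {V : Type*}

lemma fEnd_cons (G : SimpleGraph V) (Ms : Set (Sym2 V)) {u v x : V}
    (h : G.Adj u v) (p : G.Walk v x) :
    fEnd G Ms (Walk.cons h p) =
      if s(u, v) ∈ Ms then fEnd G Ms p else - fEnd G Ms p := rfl

lemma fEnd_eq_pow (G : SimpleGraph V) (Ms : Set (Sym2 V)) :
    ∀ {u v : V} (p : G.Walk u v),
      fEnd G Ms p = (-1 : ℤ) ^ (p.edges.filter (fun e => e ∉ Ms)).length
  | _, _, Walk.nil => rfl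
  | _, _, @Walk.cons _ _ a b c h p => by
    rw [fEnd_cons, Walk.edges_cons, List.filter_cons]
    by_cases hm : s(a, b) ∈ Ms
    · simp [hm, fEnd_eq_pow G Ms p]
    · simp [hm, fEnd_eq_pow G Ms p, pow_succ, mul_comm]

lemma fEnd_append (G : SimpleGraph V) (Ms : Set (Sym2 V)) {a b c : V}
    (p : G.Walk a b) (q : G.Walk b c) :
    fEnd G Ms (p.append q) = fEnd G Ms p * fEnd G Ms q := by
  rw [fEnd_eq_pow, fEnd_eq_pow, fEnd_eq_pow, Walk.edges_append, List.filter_append,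
    List.length_append, pow_add]

lemma fEnd_reverse (G : SimpleGraph V) (Ms : Set (Sym2 V)) {a b : V} (p : G.Walk a b) :
    fEnd G Ms p.reverse = fEnd G Ms p := by
  rw [fEnd_eq_pow, fEnd_eq_pow, Walk.edges_reverse, List.filter_reverse, List.length_reverse]

lemma fEnd_mul_self (G : SimpleGraph V) (Ms : Set (Sym2 V)) {a b : V} (p : G.Walk a b) :
    fEnd G Ms p * fEnd G Ms p = 1 := by
  rw [fEnd_eq_pow, ← mul_pow]
  norm_num

lemma path_edge_case (G : SimpleGraph V) {x y : V} (q : G.Walk y x) (hq : q.IsPath)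
    (he : s(x, y) ∈ q.edges) : ∃ h : G.Adj y x, q = Walk.cons h Walk.nil := by
  cases q with
  | nil => simp at he
  | @cons _ z _ h q3 =>
    rw [Walk.edges_cons, List.mem_cons] at he
    rw [Walk.cons_isPath_iff] at hq
    rcases he with he | he
    · rw [Sym2.eq_iff] at he
      rcases he with ⟨h1, h2⟩ | ⟨h1, h2⟩
      · subst h1; subst h2; exact absurd rfl h.ne
      · subst h1
        have : q3 = Walk.nil := Walk.isPath_iff_eq_nil.mp hq.1
        subst this
        exact ⟨h, rfl⟩
    · exact absurd (q3.snd_mem_support_of_mem_edges he) hq.2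

end Aux

/-- If every cycle of `G` has an even number of non-matching edges, then the ±1 diagonal
matrix `D_u` built from `f` conjugates the adjacency matrix of `G` to the (−1)-hermitian
adjacency matrix of the mixed graph `X_G` (digons exactly the matching edges). -/
theorem stmt11 {V : Type*} [Fintype V] [DecidableEq V]
    (X : MixedGraph V) [DecidableRel X.underlying.Adj]
    (hconn : X.underlying.Connected) (hbip : X.underlying.Colorable 2)
    (M : X.underlying.Subgraph) (hM : M.IsPerfectMatching)
    (huniq : ∀ N : X.underlying.Subgraph, N.IsPerfectMatching → N = M)
    (hdig : ∀ u v, X.digon u v ↔ M.Adj u v)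
    (heven : ∀ (x : V) (c : X.underlying.Walk x x), c.IsCycle →
      Even (Set.ncard {e | e ∈ c.edges ∧ e ∉ M.edgeSet}))
    (u : V) (w : V → ℤ) (hw1 : ∀ v, w v = 1 ∨ w v = -1)
    (hw : ∀ (v : V) (p : X.underlying.Walk u v), p.IsPath →
      w v = fEnd X.underlying M.edgeSet p) :
    ∀ x y : V, (w x : ℂ) * (X.underlying.adjMatrix ℂ) x y * (w y : ℂ) =
      Halpha X (-1) x y := by
  intro x y
  by_cases hadj : X.underlying.Adj x y
  · have key : w x * w y = if s(x, y) ∈ M.edgeSet then 1 else -1 := by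
      obtain ⟨p0⟩ := hconn u x
      have hp : p0.bypass.IsPath := p0.bypass_isPath
      set p := p0.bypass with hpdef
      by_cases hy : y ∈ p.support
      · have hq1 : (p.takeUntil y hy).IsPath := hp.takeUntil hy
        have hq2 : (p.dropUntil y hy).IsPath := hp.dropUntil hy
        have hwx : w x = fEnd X.underlying M.edgeSet p := hw x p hp
        have hwy : w y = fEnd X.underlying M.edgeSet (p.takeUntil y hy) := hw y _ hq1
        have hsplit : fEnd X.underlying M.edgeSet p
            = fEnd X.underlying M.edgeSet (p.takeUntil y hy) * fEnd X.underlying M.edgeSet (p.dropUntil y hy) := by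
          conv_lhs => rw [← p.take_spec hy]
          exact fEnd_append _ _ _ _
        have hq2sign : fEnd X.underlying M.edgeSet (p.dropUntil y hy)
            = if s(x, y) ∈ M.edgeSet then 1 else -1 := by
          by_cases hxe : s(x, y) ∈ (p.dropUntil y hy).edges
          · obtain ⟨h, hq⟩ := path_edge_case X.underlying _ hq2 hxe
            rw [hq, fEnd_cons, Sym2.eq_swap]
            by_cases hm : s(x, y) ∈ M.edgeSet <;> simp [hm, fEnd]
          · have hc : (Walk.cons hadj (p.dropUntil y hy)).IsCycle := by
              rw [Walk.cons_isCycle_iff]; exact ⟨hq2, hxe⟩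
            have he := heven x _ hc
            have hnodup := hc.edges_nodup
            have hn : {e | e ∈ (Walk.cons hadj (p.dropUntil y hy)).edges ∧ e ∉ M.edgeSet}.ncard
                = ((Walk.cons hadj (p.dropUntil y hy)).edges.filter
                    (fun e => e ∉ M.edgeSet)).length := by
              rw [show {e | e ∈ (Walk.cons hadj (p.dropUntil y hy)).edges ∧ e ∉ M.edgeSet}
                  = ((Walk.cons hadj (p.dropUntil y hy)).edges.filter
                      (fun e => e ∉ M.edgeSet)).toFinset from by
                ext e; simp [List.mem_filter]]
              rw [Set.ncard_coe_finset, List.toFinset_card_of_nodup (hnodup.filter _)]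
            have hone : fEnd X.underlying M.edgeSet (Walk.cons hadj (p.dropUntil y hy)) = 1 := by
              rw [fEnd_eq_pow]
              exact Even.neg_one_pow (by rw [← hn]; exact he)
            rw [fEnd_cons] at hone
            by_cases hm : s(x, y) ∈ M.edgeSet <;> simp [hm] at hone ⊢ <;> linarith
        rw [hwx, hwy, hsplit, ← hq2sign]
        have h11 := fEnd_mul_self X.underlying M.edgeSet (p.takeUntil y hy)
        linear_combination fEnd X.underlying M.edgeSet (p.dropUntil y hy) * h11
      · have hyr : y ∉ p.reverse.support := by rwa [Walk.support_reverse, List.mem_reverse]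
        have hq' : (Walk.cons hadj.symm p.reverse).IsPath := by
          rw [Walk.cons_isPath_iff]; exact ⟨hp.reverse, hyr⟩
        have hwy : w y = fEnd X.underlying M.edgeSet (Walk.cons hadj.symm p.reverse).reverse :=
          hw y _ hq'.reverse
        rw [fEnd_reverse, fEnd_cons, fEnd_reverse] at hwy
        have hwx : w x = fEnd X.underlying M.edgeSet p := hw x p hp
        rw [Sym2.eq_swap] at hwy
        have h11 := fEnd_mul_self X.underlying M.edgeSet p
        rw [hwx, hwy]
        by_cases hm : s(x, y) ∈ M.edgeSet <;> simp [hm] <;> linarith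
    rw [SimpleGraph.adjMatrix_apply, if_pos hadj]
    have hadj' : X.digon x y ∨ X.arc x y ∨ X.arc y x := hadj
    by_cases hd : X.digon x y
    · have hm : s(x, y) ∈ M.edgeSet := (SimpleGraph.Subgraph.mem_edgeSet).mpr ((hdig x y).mp hd)
      rw [if_pos hm] at key
      have hkc : ((w x : ℂ)) * ((w y : ℂ)) = 1 := by
        have : ((w x * w y : ℤ) : ℂ) = 1 := by rw [key]; norm_num
        push_cast at this; exact this
      simp only [Halpha, if_pos hd]
      linear_combination hkc
    · have hm : s(x, y) ∉ M.edgeSet := fun hc =>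
        hd ((hdig x y).mpr ((SimpleGraph.Subgraph.mem_edgeSet).mp hc))
      rw [if_neg hm] at key
      have hkc : ((w x : ℂ)) * ((w y : ℂ)) = -1 := by
        have : ((w x * w y : ℤ) : ℂ) = -1 := by rw [key]; norm_num
        push_cast at this; exact this
      simp only [Halpha, if_neg hd]
      rcases hadj' with h | h | h
      · exact absurd h hd
      · rw [if_pos h]; linear_combination hkc
      · have hna : ¬ X.arc x y := fun h2 => X.arc_asymm y x h h2
        rw [if_neg hna, if_pos h]
        simp only [map_neg, map_one]
        linear_combination hkc
  · rw [SimpleGraph.adjMatrix_apply, if_neg hadj]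
    have h1 : ¬ X.digon x y := fun h => hadj (Or.inl h)
    have h2 : ¬ X.arc x y := fun h => hadj (Or.inr (Or.inl h))
    have h3 : ¬ X.arc y x := fun h => hadj (Or.inr (Or.inr h))
    simp [Halpha, h1, h2, h3]
end

section
/- Let X be a unicyclic bipartite graph with a unique perfect matching M. Then X has at least two pegs, where a peg is a matching edge incident to a vertex of the unique cycle of X but not an edge of the cycle. -/
open SimpleGraph
open scoped Classical

section Aux

open SimpleGraph Walk

variable {V : Type*} {G : SimpleGraph V} {u : V}

/-- In a path, there is at most one edge incident to the start vertex. -/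
lemma aux_first_edge_unique {a b : V} {p : G.Walk a b} (hp : p.IsPath) {x y : V}
    (hx : s(a, x) ∈ p.edges) (hy : s(a, y) ∈ p.edges) : x = y := by
  cases p with
  | nil => simp at hx
  | @cons _ w _ h q =>
    have hsup := hp.support_nodup
    rw [Walk.support_cons, List.nodup_cons] at hsup
    have key : ∀ z : V, s(a, z) ∈ (Walk.cons h q).edges → z = w := by
      intro z hz
      rw [Walk.edges_cons, List.mem_cons] at hz
      rcases hz with hz | hz
      · exact (Sym2.congr_right.mp hz)
      · exact absurd (q.fst_mem_support_of_mem_edges hz) hsup.1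
    rw [key x hx, key y hy]

/-- Every vertex on a cycle has exactly two neighbors along the cycle. -/
lemma aux_cycle_nbhds {c : G.Walk u u} (hc : c.IsCycle) {v : V} (hv : v ∈ c.support) :
    ∃ a b : V, a ≠ b ∧ s(v, a) ∈ c.edges ∧ s(v, b) ∈ c.edges ∧
      ∀ w, s(v, w) ∈ c.edges → w = a ∨ w = b := by
  have hrot := hc.rotate (u := v) hv
  have hmem : ∀ e, e ∈ (c.rotate v hv).edges ↔ e ∈ c.edges :=
    fun e => (Walk.rotate_edges c v hv).mem_iff
  obtain ⟨w, hadj, q, hq⟩ := Walk.not_nil_iff.mp hrot.not_nil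
  rw [hq] at hrot hmem
  obtain ⟨hqpath, hqe⟩ := (Walk.cons_isCycle_iff q hadj).mp hrot
  have hqlen : 0 < q.length := by
    have h3 := hrot.three_le_length
    rw [Walk.length_cons] at h3
    omega
  have hqrev : ¬ q.reverse.Nil := by
    rw [Walk.not_nil_iff_lt_length, Walk.length_reverse]
    exact hqlen
  obtain ⟨b, hadj2, r, hr⟩ := Walk.not_nil_iff.mp hqrev
  have hrevpath : q.reverse.IsPath := hqpath.reverse
  have hbq : s(v, b) ∈ q.edges := by
    rw [← List.mem_reverse, ← Walk.edges_reverse, hr, Walk.edges_cons]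
    exact List.mem_cons_self
  refine ⟨w, b, ?_, ?_, ?_, ?_⟩
  · rintro rfl
    exact hqe hbq
  · rw [← hmem, Walk.edges_cons]
    exact List.mem_cons_self
  · rw [← hmem, Walk.edges_cons]
    exact List.mem_cons.mpr (Or.inr hbq)
  · intro z hz
    rw [← hmem, Walk.edges_cons, List.mem_cons] at hz
    rcases hz with hz | hz
    · exact Or.inl (Sym2.congr_right.mp hz)
    · right
      have hz' : s(v, z) ∈ q.reverse.edges := by
        rwa [Walk.edges_reverse, List.mem_reverse]
      rw [hr, Walk.edges_cons, List.mem_cons] at hz'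
      rcases hz' with hz' | hz'
      · exact Sym2.congr_right.mp hz'
      · exfalso
        have hvr : v ∈ r.support := r.fst_mem_support_of_mem_edges hz'
        have := hrevpath.support_nodup
        rw [hr, Walk.support_cons, List.nodup_cons] at this
        exact this.1 hvr

/-- In a cycle (as a closed walk), every support vertex is in the tail of the support. -/
lemma aux_mem_support_tail {c : G.Walk u u} (hn : ¬ c.Nil) {v : V} (hv : v ∈ c.support) :
    v ∈ c.support.tail := by
  cases c with
  | nil => simp at hn
  | cons h q =>
    rw [Walk.support_cons] at hv
    rw [Walk.support_cons, List.tail_cons]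
    rcases List.mem_cons.mp hv with rfl | h'
    · exact q.end_mem_support
    · exact h'

/-- A unicyclic graph has no chord on its cycle. -/
lemma aux_no_chord (hunic : IsUnicyclic G) {c : G.Walk u u} (hc : c.IsCycle)
    {v1 v2 : V} (h1 : v1 ∈ c.support) (h2 : v2 ∈ c.support)
    (hadj : G.Adj v1 v2) (hne : s(v1, v2) ∉ c.edges) : False := by
  have h2' : v2 ∈ (c.rotate v1 h1).support := by
    have ht : v2 ∈ c.support.tail := aux_mem_support_tail hc.not_nil h2
    exact List.mem_of_mem_tail ((Walk.support_rotate c v1 h1).mem_iff.mpr ht)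
  set p := (c.rotate v1 h1).takeUntil v2 h2' with hp
  have hpe : ∀ e ∈ p.edges, e ∈ c.edges := fun e he =>
    (Walk.rotate_edges c v1 h1).mem_iff.mp (Walk.edges_takeUntil_subset _ h2' he)
  have hreach : (G \ SimpleGraph.fromEdgeSet {s(v1, v2)}).Reachable v1 v2 := by
    refine ⟨p.toDeleteEdges {s(v1, v2)} ?_⟩
    intro e he hmem
    rw [Set.mem_singleton_iff] at hmem
    exact hne (hmem ▸ hpe e he)
  obtain ⟨u', p2, hp2, hmem2⟩ :=
    SimpleGraph.adj_and_reachable_delete_edges_iff_exists_cycle.mp ⟨hadj, hreach⟩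
  have hsets := hunic.2.2 u' u p2 c hp2 hc
  exact hne ((Set.ext_iff.mp hsets s(v1, v2)).mp hmem2)

/-- Internal vertices (matched along the cycle) come in pairs, so there are evenly many. -/
lemma aux_even_internal {G : SimpleGraph V} {M : G.Subgraph} (hM : M.IsMatching)
    {u : V} {c : G.Walk u u}
    (I : Finset V)
    (hI : ∀ v ∈ I, ∃ w, M.Adj v w ∧ s(v, w) ∈ c.edges)
    (hIc : ∀ v w, M.Adj v w → s(v, w) ∈ c.edges → v ∈ I) :
    Even I.card := by
  let K : G.Subgraph :=
    { verts := (I : Set V)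
      Adj := fun a b => M.Adj a b ∧ s(a, b) ∈ c.edges
      adj_sub := fun h => M.adj_sub h.1
      edge_vert := fun {a b} h => hIc a b h.1 h.2
      symm := ⟨fun a b h => ⟨M.adj_symm h.1, by rw [Sym2.eq_swap]; exact h.2⟩⟩ }
  have hKmatch : K.IsMatching := by
    intro v hv
    obtain ⟨w, hw, he⟩ := hI v hv
    refine ⟨w, ⟨hw, he⟩, ?_⟩
    intro y hy
    obtain ⟨w0, hw0, hu0⟩ := hM (M.edge_vert hw)
    rw [hu0 y hy.1, ← hu0 w hw]
  haveI : Fintype K.verts := FinsetCoe.fintype I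
  have heven := hKmatch.even_card
  rwa [show K.verts.toFinset = I from Finset.toFinset_coe I] at heven

end Aux

open scoped symmDiff

/-- A unicyclic bipartite graph with a unique perfect matching has at least two pegs. -/
theorem stmt12 {V : Type*} (G : SimpleGraph V) (hunic : IsUnicyclic G)
    (hbip : G.Colorable 2)
    (M : G.Subgraph) (hM : M.IsPerfectMatching)
    (huniq : ∀ N : G.Subgraph, N.IsPerfectMatching → N = M)
    {u : V} (c : G.Walk u u) (hc : c.IsCycle) :
    ∃ e f : Sym2 V, e ≠ f ∧ IsPeg G M c e ∧ IsPeg G M c f := by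
  classical
  by_contra hcon
  -- all pegs are equal
  have hpeq : ∀ e f : Sym2 V, IsPeg G M c e → IsPeg G M c f → e = f := by
    intro e f he hf
    by_contra hne
    exact hcon ⟨e, f, hne, he, hf⟩
  -- pegs from externally matched cycle vertices
  have hpeg : ∀ v ∈ c.support, ∀ w, M.Adj v w → s(v, w) ∉ c.edges →
      IsPeg G M c s(v, w) := by
    intro v hv w hmw hnc
    exact ⟨SimpleGraph.Subgraph.mem_edgeSet.mpr hmw, hnc, ⟨v, hv, Sym2.mem_mk_left _ _⟩⟩
  set Internal : V → Prop := fun v => ∃ w, M.Adj v w ∧ s(v, w) ∈ c.edges with hInternal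
  set T : Finset V := c.support.tail.toFinset with hT
  have hTmem : ∀ v ∈ c.support, v ∈ T :=
    fun v hv => List.mem_toFinset.mpr (aux_mem_support_tail hc.not_nil hv)
  have hTsup : ∀ v ∈ T, v ∈ c.support :=
    fun v hv => List.mem_of_mem_tail (List.mem_toFinset.mp hv)
  -- cycle length is even, since G is bipartite
  have hcol : G.Coloring Bool := G.recolorOfEquiv finTwoEquiv hbip.some
  have hTeven : Even T.card := by
    have hlen : Even c.length := (hcol.even_length_iff_congr c).mpr Iff.rfl
    have hcard : T.card = c.length := by
      rw [hT, List.toFinset_card_of_nodup hc.support_nodup, List.length_tail,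
        SimpleGraph.Walk.length_support]
      omega
    rwa [hcard]
  set X : Finset V := T.filter (fun v => ¬ Internal v) with hX
  set I : Finset V := T.filter (fun v => Internal v) with hI
  -- at most one external vertex
  have hXone : X.card ≤ 1 := by
    rw [Finset.card_le_one]
    intro v1 hv1 v2 hv2
    by_contra hvne
    rw [hX, Finset.mem_filter] at hv1 hv2
    obtain ⟨w1, hw1, -⟩ := hM.1 (hM.2 v1)
    obtain ⟨w2, hw2, -⟩ := hM.1 (hM.2 v2)
    have hn1 : s(v1, w1) ∉ c.edges := fun h => hv1.2 ⟨w1, hw1, h⟩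
    have hn2 : s(v2, w2) ∉ c.edges := fun h => hv2.2 ⟨w2, hw2, h⟩
    have he : s(v1, w1) = s(v2, w2) :=
      hpeq _ _ (hpeg v1 (hTsup v1 hv1.1) w1 hw1 hn1) (hpeg v2 (hTsup v2 hv2.1) w2 hw2 hn2)
    rw [Sym2.eq_iff] at he
    rcases he with ⟨h1, -⟩ | ⟨h1, h2⟩
    · exact hvne h1
    · subst h2
      exact aux_no_chord hunic hc (hTsup v1 hv1.1) (hTsup w1 hv2.1)
        (M.adj_sub hw1) hn1
  -- evenly many external vertices
  have hXeven : Even X.card := by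
    have hIeven : Even I.card := by
      refine aux_even_internal (c := c) hM.1 I ?_ ?_
      · intro v hv
        exact (Finset.mem_filter.mp hv).2
      · intro v w hvw he
        exact Finset.mem_filter.mpr
          ⟨hTmem v (c.fst_mem_support_of_mem_edges he), ⟨w, hvw, he⟩⟩
    have hsplit : I.card + X.card = T.card :=
      Finset.card_filter_add_card_filter_not (fun v => Internal v)
    rcases Nat.even_add.mp (hsplit ▸ hTeven) |>.mp hIeven with h
    exact h
  -- hence no external vertices: every cycle vertex is internally matched
  have hXzero : X.card = 0 := by
    obtain ⟨k, hk⟩ := hXeven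
    omega
  have hallint : ∀ v ∈ c.support, ∃ w, M.Adj v w ∧ s(v, w) ∈ c.edges := by
    intro v hv
    by_contra hni
    have : v ∈ X := Finset.mem_filter.mpr ⟨hTmem v hv, hni⟩
    rw [Finset.card_eq_zero.mp hXzero] at this
    simp at this
  -- the cycle as a simple graph
  set G' : SimpleGraph V := c.toSubgraph.spanningCoe with hG'
  have hG'adj : ∀ x y : V, G'.Adj x y ↔ s(x, y) ∈ c.edges := by
    intro x y
    rw [hG', SimpleGraph.Subgraph.spanningCoe_adj,
      ← SimpleGraph.Subgraph.mem_edgeSet, SimpleGraph.Walk.mem_edges_toSubgraph]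
  -- G' consists of cycles
  have hcyc : G'.IsCycles := by
    intro v hv
    obtain ⟨w, hw⟩ := hv
    have hv' : v ∈ c.support := c.fst_mem_support_of_mem_edges ((hG'adj v w).mp hw)
    obtain ⟨a, b, hab, ha, hb, hun⟩ := aux_cycle_nbhds hc hv'
    have hset : G'.neighborSet v = {a, b} := by
      ext x
      simp only [SimpleGraph.mem_neighborSet, hG'adj, Set.mem_insert_iff,
        Set.mem_singleton_iff]
      exact ⟨fun h => hun x h, fun h => h.elim (fun h => h ▸ ha) (fun h => h ▸ hb)⟩
    rw [hset]
    exact Set.ncard_pair hab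
  -- G' is alternating with respect to M
  have halt : G'.IsAlternating M.spanningCoe := by
    intro v w w' hne hvw hvw'
    have hv' : v ∈ c.support := c.fst_mem_support_of_mem_edges ((hG'adj v w).mp hvw)
    obtain ⟨p, hp, hpe⟩ := hallint v hv'
    have hiff : ∀ x : V, M.spanningCoe.Adj v x ↔ x = p := by
      intro x
      rw [SimpleGraph.Subgraph.spanningCoe_adj]
      constructor
      · intro h
        obtain ⟨w0, hw0, hu0⟩ := hM.1 (hM.2 v)
        rw [hu0 x h, ← hu0 p hp]
      · rintro rfl; exact hp
    obtain ⟨a, b, hab, ha, hb, hun⟩ := aux_cycle_nbhds hc hv'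
    have hwv := hun w ((hG'adj _ _).mp hvw)
    have hw'v := hun w' ((hG'adj _ _).mp hvw')
    have hp' : p = w ∨ p = w' := by
      rcases hun p hpe with rfl | rfl <;> rcases hwv with rfl | rfl <;>
        rcases hw'v with rfl | rfl <;> tauto
    rw [hiff w, hiff w']
    constructor
    · intro hw hw'
      exact hne (hw.trans hw'.symm)
    · intro hnw'
      rcases hp' with h | h
      · exact h.symm
      · exact absurd h.symm hnw'
  -- the symmetric difference is a second perfect matching
  have hle : M.spanningCoe ∆ G' ≤ G := by
    rw [symmDiff_def]
    exact sup_le (sdiff_le.trans M.spanningCoe_le)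
      (sdiff_le.trans (SimpleGraph.Subgraph.spanningCoe_le _))
  have hN0 := SimpleGraph.Subgraph.IsPerfectMatching.symmDiff_of_isAlternating hM halt hcyc
  set N0 := SimpleGraph.toSubgraph (M.spanningCoe ∆ G') (le_refl _) with hN0def
  set N : G.Subgraph := N0.map (SimpleGraph.Hom.ofLE hle) with hNdef
  have hNpm : N.IsPerfectMatching := by
    constructor
    · exact hN0.1.map_ofLE hle
    · intro v
      rw [hNdef]
      refine ⟨v, hN0.2 v, rfl⟩
  have hNM : N = M := huniq N hNpm
  obtain ⟨w0, hw0, he0⟩ := hallint u c.start_mem_support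
  have hNadj : N.Adj u w0 := hNM ▸ hw0
  rw [hNdef] at hNadj
  obtain ⟨a, b, hab, ha, hb⟩ := hNadj
  have hab' : (M.spanningCoe ∆ G').Adj u w0 := by
    rw [← show (SimpleGraph.Hom.ofLE hle) a = u from ha,
      ← show (SimpleGraph.Hom.ofLE hle) b = w0 from hb]
    exact hab
  rw [symmDiff_def] at hab'
  rcases hab' with h | h
  · exact h.2 ((hG'adj u w0).mpr he0)
  · exact h.2 hw0
end

section
/- Let X be a unicyclic bipartite graph with unique perfect matching M and exactly two pegs ρ1 and ρ2. If there are two distinct co-augmenting paths from a vertex u to a vertex v, then both ρ1 and ρ2 are edges of both of these paths. -/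
open SimpleGraph
open scoped Classical

section AuxLemmas

variable {V : Type*} {G : SimpleGraph V}

lemma aux_exists_partner {M : G.Subgraph} {a : V} {e : Sym2 V}
    (he : e ∈ M.edgeSet) (ha : a ∈ e) : ∃ w, e = s(a, w) ∧ M.Adj a w := by
  induction e using Sym2.ind with
  | _ s t =>
    rw [Sym2.mem_iff] at ha
    rw [SimpleGraph.Subgraph.mem_edgeSet] at he
    rcases ha with rfl | rfl
    · exact ⟨t, rfl, he⟩
    · exact ⟨s, Sym2.eq_swap, he.symm⟩

lemma aux_matching_unique {M : G.Subgraph} (hM : M.IsPerfectMatching)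
    {a : V} {e1 e2 : Sym2 V} (h1 : e1 ∈ M.edgeSet) (h2 : e2 ∈ M.edgeSet)
    (ha1 : a ∈ e1) (ha2 : a ∈ e2) : e1 = e2 := by
  obtain ⟨w1, rfl, hw1⟩ := aux_exists_partner h1 ha1
  obtain ⟨w2, rfl, hw2⟩ := aux_exists_partner h2 ha2
  obtain ⟨w, -, huw⟩ := hM.1 (hM.2 a)
  rw [huw w1 hw1, huw w2 hw2]

lemma aux_mem_support {x y a : V} {p : G.Walk x y} {e : Sym2 V}
    (he : e ∈ p.edges) (ha : a ∈ e) : a ∈ p.support := by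
  induction e using Sym2.ind with
  | _ s t =>
    rcases Sym2.mem_iff.1 ha with rfl | rfl
    · exact p.fst_mem_support_of_mem_edges he
    · exact p.snd_mem_support_of_mem_edges he

lemma aux_start_unique : ∀ {x y : V} (p : G.Walk x y), p.IsPath →
    ∀ e ∈ p.edges, x ∈ e → ∀ f ∈ p.edges, x ∈ f → e = f := by
  intro x y p
  induction p with
  | nil => intro _ e he _ _ _ _; simp at he
  | cons h p ih =>
    intro hp e he hxe f hf hxf
    rw [SimpleGraph.Walk.cons_isPath_iff] at hp
    rw [SimpleGraph.Walk.edges_cons, List.mem_cons] at he hf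
    rcases he with rfl | he
    · rcases hf with rfl | hf
      · rfl
      · exact absurd (aux_mem_support hf hxf) hp.2
    · exact absurd (aux_mem_support he hxe) hp.2

lemma aux_path_three : ∀ {x y : V} (p : G.Walk x y), p.IsPath →
    ∀ (a : V) (e1 e2 e3 : Sym2 V), e1 ∈ p.edges → e2 ∈ p.edges → e3 ∈ p.edges →
    a ∈ e1 → a ∈ e2 → a ∈ e3 → e1 ≠ e2 → e1 ≠ e3 → e2 ≠ e3 → False := by
  intro x y p
  induction p with
  | nil => intro _ a e1 e2 e3 h1 _ _ _ _ _ _ _ _; simp at h1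
  | @cons u v w h p ih =>
    intro hp a e1 e2 e3 h1 h2 h3 ha1 ha2 ha3 n12 n13 n23
    rw [SimpleGraph.Walk.cons_isPath_iff] at hp
    rw [SimpleGraph.Walk.edges_cons, List.mem_cons] at h1 h2 h3
    have tail2 : ∀ f g : Sym2 V, f ∈ p.edges → g ∈ p.edges → f ≠ g → a ∈ f → a ∈ g →
        a ∈ (s(u, v) : Sym2 V) → False := by
      intro f g hf hg hfg haf hag hah
      rcases Sym2.mem_iff.1 hah with rfl | rfl
      · exact hp.2 (aux_mem_support hf haf)
      · exact hfg (aux_start_unique p hp.1 f hf haf g hg hag)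
    rcases h1 with rfl | h1
    · rcases h2 with rfl | h2
      · exact n12 rfl
      rcases h3 with rfl | h3
      · exact n13 rfl
      exact tail2 e2 e3 h2 h3 n23 ha2 ha3 ha1
    · rcases h2 with rfl | h2
      · rcases h3 with rfl | h3
        · exact n23 rfl
        exact tail2 e1 e3 h1 h3 n13 ha1 ha3 ha2
      · rcases h3 with rfl | h3
        · exact tail2 e1 e2 h1 h2 n12 ha1 ha2 ha3
        · exact ih hp.1 a e1 e2 e3 h1 h2 h3 ha1 ha2 ha3 n12 n13 n23

lemma aux_end_edge : ∀ {x y : V} (p : G.Walk x y), p.length ≠ 0 → ∃ e ∈ p.edges, y ∈ e := by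
  intro x y p
  induction p with
  | nil => intro hl; simp at hl
  | @cons u v w h p ih =>
    intro _
    rcases Nat.eq_zero_or_pos p.length with h0 | hpos
    · have hv : v = w := SimpleGraph.Walk.eq_of_length_eq_zero h0
      subst hv
      exact ⟨s(u, v), by simp, by simp⟩
    · obtain ⟨e, he, hye⟩ := ih hpos.ne'
      exact ⟨e, by simp [he], hye⟩

lemma aux_cycle_two : ∀ {a : V} (c : G.Walk a a), c.IsCycle →
    ∃ e1 e2 : Sym2 V, e1 ∈ c.edges ∧ e2 ∈ c.edges ∧ e1 ≠ e2 ∧ a ∈ e1 ∧ a ∈ e2 := by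
  intro a c
  cases c with
  | nil => intro hc; exact absurd rfl hc.ne_nil
  | @cons _ b _ h p =>
    intro hc
    have hlen : 3 ≤ (SimpleGraph.Walk.cons h p).length := hc.three_le_length
    rw [SimpleGraph.Walk.length_cons] at hlen
    have hplen : p.length ≠ 0 := by omega
    obtain ⟨e2, he2, hae2⟩ := aux_end_edge p hplen
    refine ⟨s(a, b), e2, by simp, by simp [he2], ?_, by simp, hae2⟩
    have hnd : (SimpleGraph.Walk.cons h p).edges.Nodup := hc.edges_nodup
    rw [SimpleGraph.Walk.edges_cons] at hnd
    intro hEq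
    exact (List.nodup_cons.mp hnd).1 (hEq ▸ he2)

lemma aux_edge_cover (hunic : IsUnicyclic G) {u : V} {c : G.Walk u u} (hc : c.IsCycle)
    {x y : V} {p q : G.Walk x y} (hp : p.IsPath) (hq : q.IsPath) (hpq : p ≠ q) :
    ∀ e ∈ c.edges, e ∈ p.edges ∨ e ∈ q.edges := by
  intro e he
  by_contra hcon
  push_neg at hcon
  have hac : (G.deleteEdges {e}).IsAcyclic := by
    intro v d hd
    have hsub : ∀ e', e' ∈ d.edges → e' ∈ G.edgeSet := fun e' he' =>
      SimpleGraph.edgeSet_mono (G.deleteEdges_le (s := {e})) (d.edges_subset_edgeSet he')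
    have hd' : (d.transfer G hsub).IsCycle := hd.transfer hsub
    have hEq := hunic.2.2 v u (d.transfer G hsub) c hd' hc
    have hmem : e ∈ (d.transfer G hsub).edges := by
      have h1 : e ∈ {e' | e' ∈ c.edges} := he
      rw [← hEq] at h1
      exact h1
    rw [SimpleGraph.Walk.edges_transfer] at hmem
    have h2 := d.edges_subset_edgeSet hmem
    rw [SimpleGraph.edgeSet_deleteEdges] at h2
    exact h2.2 rfl
  have hp' : ∀ e', e' ∈ p.edges → e' ∉ ({e} : Set (Sym2 V)) := by
    intro e' he' h'
    rw [Set.mem_singleton_iff] at h'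
    exact hcon.1 (h' ▸ he')
  have hq' : ∀ e', e' ∈ q.edges → e' ∉ ({e} : Set (Sym2 V)) := by
    intro e' he' h'
    rw [Set.mem_singleton_iff] at h'
    exact hcon.2 (h' ▸ he')
  have huniqp := hac.path_unique
    ⟨p.toDeleteEdges {e} hp', hp.transfer _⟩ ⟨q.toDeleteEdges {e} hq', hq.transfer _⟩
  apply hpq
  have h1 := SimpleGraph.Walk.map_toDeleteEdges_eq (G := G) {e} hp'
  have h2 := SimpleGraph.Walk.map_toDeleteEdges_eq (G := G) {e} hq'
  rw [← h1, ← h2]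
  exact congrArg _ (congrArg Subtype.val huniqp)

lemma aux_alt_cover {M : G.Subgraph} :
    ∀ (n : ℕ) {x y : V} (p : G.Walk x y), p.edges.length = n → Odd n →
      (∀ (i : ℕ) (hi : i < p.edges.length), (p.edges[i]'hi ∈ M.edgeSet ↔ Even i)) →
      ∀ a ∈ p.support, ∃ e ∈ p.edges, e ∈ M.edgeSet ∧ a ∈ e := by
  intro n
  induction n using Nat.strong_induction_on with
  | _ n ih =>
    intro x y p hlen hodd halt a ha
    cases p with
    | nil =>
      simp only [SimpleGraph.Walk.edges_nil, List.length_nil] at hlen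
      subst hlen
      simp at hodd
    | @cons _ b _ h p₁ =>
      have he0 : s(x, b) ∈ M.edgeSet := by
        have h0 := halt 0 (by simp [SimpleGraph.Walk.edges_cons])
        simpa [SimpleGraph.Walk.edges_cons] using h0
      cases p₁ with
      | nil =>
        have ha' : a = x ∨ a = y := by
          simpa [SimpleGraph.Walk.support_cons, SimpleGraph.Walk.support_nil] using ha
        refine ⟨s(x, y), by simp, he0, ?_⟩
        rcases ha' with rfl | rfl <;> simp
      | @cons _ c' _ h' p₂ =>
        have hlen2 : p₂.edges.length + 2 = n := by
          simpa [SimpleGraph.Walk.edges_cons] using hlen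
        have hodd2 : Odd p₂.edges.length := by
          rcases hodd with ⟨k, hk⟩
          exact ⟨k - 1, by omega⟩
        have halt2 : ∀ (i : ℕ) (hi : i < p₂.edges.length),
            (p₂.edges[i]'hi ∈ M.edgeSet ↔ Even i) := by
          intro i hi
          have h2 := halt (i + 2) (by simp only [SimpleGraph.Walk.edges_cons, List.length_cons]; omega)
          have hget : ((SimpleGraph.Walk.cons h (SimpleGraph.Walk.cons h' p₂)).edges[i + 2]'
              (by simp only [SimpleGraph.Walk.edges_cons, List.length_cons]; omega)) = p₂.edges[i]'hi := rfl
          rw [hget] at h2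
          have hpar : Even (i + 2) ↔ Even i := by
            constructor
            · rintro ⟨k, hk⟩; exact ⟨k - 1, by omega⟩
            · rintro ⟨k, hk⟩; exact ⟨k + 1, by omega⟩
          rw [hpar] at h2
          exact h2
        have ha' : a = x ∨ a = b ∨ a ∈ p₂.support := by
          simpa [SimpleGraph.Walk.support_cons] using ha
        rcases ha' with rfl | rfl | hsup
        · exact ⟨s(a, b), by simp, he0, by simp⟩
        · exact ⟨s(x, a), by simp, he0, by simp⟩
        · obtain ⟨e, he, heM, hae⟩ :=
            ih p₂.edges.length (by omega) p₂ rfl hodd2 halt2 a hsup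
          exact ⟨e, by simp [SimpleGraph.Walk.edges_cons, he], heM, hae⟩

end AuxLemmas

/-- In a unicyclic bipartite graph with a unique perfect matching and exactly two pegs,
two distinct co-augmenting paths between the same pair of vertices both contain both pegs. -/
theorem stmt14 {V : Type*} (G : SimpleGraph V) (hunic : IsUnicyclic G)
    (hbip : G.Colorable 2)
    (M : G.Subgraph) (hM : M.IsPerfectMatching)
    (huniq : ∀ N : G.Subgraph, N.IsPerfectMatching → N = M)
    {u : V} (c : G.Walk u u) (hc : c.IsCycle)
    (ρ1 ρ2 : Sym2 V) (hne : ρ1 ≠ ρ2)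
    (hρ1 : IsPeg G M c ρ1) (hρ2 : IsPeg G M c ρ2)
    (honly : ∀ e, IsPeg G M c e → e = ρ1 ∨ e = ρ2)
    {x y : V} (p q : G.Walk x y) (hpq : p ≠ q)
    (hp : IsCoAugmenting G M.edgeSet p) (hq : IsCoAugmenting G M.edgeSet q) :
    ρ1 ∈ p.edges ∧ ρ2 ∈ p.edges ∧ ρ1 ∈ q.edges ∧ ρ2 ∈ q.edges := by
  obtain ⟨hpPath, hpOdd, hpAlt⟩ := hp
  obtain ⟨hqPath, hqOdd, hqAlt⟩ := hq
  have cover := aux_edge_cover hunic hc hpPath hqPath hpq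
  have key : ∀ ρ, IsPeg G M c ρ → ρ ∈ p.edges ∧ ρ ∈ q.edges := by
    rintro ρ ⟨hρM, hρc, a, hac, haρ⟩
    obtain ⟨e1, e2, he1, he2, hne12, hae1, hae2⟩ := aux_cycle_two (c.rotate a hac) (hc.rotate hac)
    have hrot := (SimpleGraph.Walk.rotate_edges c a hac).perm
    have he1c : e1 ∈ c.edges := hrot.mem_iff.1 he1
    have he2c : e2 ∈ c.edges := hrot.mem_iff.1 he2
    have hne1ρ : e1 ≠ ρ := fun hEq => hρc (hEq ▸ he1c)
    have hne2ρ : e2 ≠ ρ := fun hEq => hρc (hEq ▸ he2c)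
    have getρ : ∀ (r : G.Walk x y), Odd r.edges.length →
        (∀ i : Fin r.edges.length, (r.edges.get i ∈ M.edgeSet ↔ Even i.val)) →
        a ∈ r.support → ρ ∈ r.edges := by
      intro r hodd halt har
      obtain ⟨e, he, heM, hae⟩ := aux_alt_cover r.edges.length r rfl hodd
        (fun i hi => by simpa using halt ⟨i, hi⟩) a har
      rwa [aux_matching_unique hM heM hρM hae haρ] at he
    have main : ∀ (r : G.Walk x y), r.IsPath → Odd r.edges.length →
        (∀ i : Fin r.edges.length, (r.edges.get i ∈ M.edgeSet ↔ Even i.val)) →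
        ¬ (e1 ∈ r.edges ∧ e2 ∈ r.edges) := by
      rintro r hr hodd halt ⟨hr1, hr2⟩
      have har : a ∈ r.support := aux_mem_support hr1 hae1
      have hρr : ρ ∈ r.edges := getρ r hodd halt har
      exact aux_path_three r hr a e1 e2 ρ hr1 hr2 hρr hae1 hae2 haρ hne12 hne1ρ hne2ρ
    rcases cover e1 he1c with h1p | h1q <;> rcases cover e2 he2c with h2p | h2q
    · exact absurd ⟨h1p, h2p⟩ (main p hpPath hpOdd hpAlt)
    · exact ⟨getρ p hpOdd hpAlt (aux_mem_support h1p hae1),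
        getρ q hqOdd hqAlt (aux_mem_support h2q hae2)⟩
    · exact ⟨getρ p hpOdd hpAlt (aux_mem_support h2p hae2),
        getρ q hqOdd hqAlt (aux_mem_support h1q hae1)⟩
    · exact absurd ⟨h1q, h2q⟩ (main q hqPath hqOdd hqAlt)
  obtain ⟨h1p, h1q⟩ := key ρ1 hρ1
  obtain ⟨h2p, h2q⟩ := key ρ2 hρ2
  exact ⟨h1p, h2p, h1q, h2q⟩
end
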